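/- The ratio a_{n+1}^{1/(n+1)} / a_n^{1/n} converges to 1 as n → ∞. -/

import Mathlib

noncomputable def a (n : ℕ) : ℝ :=
  (1 / (n : ℝ)) * ∑ k ∈ Finset.range n,
    ((n - 1).choose k : ℝ) ^ 2 * ((n + k).choose k : ℝ) ^ 2 / (4 * (k : ℝ) ^ 2 - 1)

open Finset Real Filter Topology


noncomputable def P : ℝ := 1 + Real.sqrt 2

lemma two_le_P : 2 ≤ P := by
  have : (1:ℝ) ≤ Real.sqrt 2 := by
    rw [show (1:ℝ) = Real.sqrt 1 by simp]
    exact Real.sqrt_le_sqrt (by norm_num)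
  unfold P; linarith

lemma P_pos : 0 < P := lt_of_lt_of_le two_pos two_le_P

noncomputable def S (m : ℕ) : ℝ := ∑ k ∈ range (m+1), (m.choose k : ℝ) * ((m+k).choose k : ℝ)

lemma binom_sqrt (m : ℕ) :
    ∑ j ∈ range (m+1), (m.choose j : ℝ) * Real.sqrt 2 ^ (m - j) = P ^ m := by
  unfold P
  rw [add_pow]
  refine Finset.sum_congr rfl fun j hj => ?_
  rw [one_pow]
  ring

lemma vdm (m k : ℕ) : (m + k).choose k = ∑ j ∈ range (k+1), m.choose j * k.choose j := by
  rw [Nat.add_choose_eq, Finset.Nat.sum_antidiagonal_eq_sum_range_succ_mk]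
  refine Finset.sum_congr rfl fun j hj => ?_
  simp only [mem_range] at hj
  rw [Nat.choose_symm (by omega)]

lemma delannoy_id (m : ℕ) :
    ∑ k ∈ range (m+1), m.choose k * (m + k).choose k
      = ∑ j ∈ range (m+1), m.choose j ^ 2 * 2 ^ (m - j) := by
  have h1 : ∀ k ∈ range (m+1), m.choose k * (m+k).choose k
      = ∑ j ∈ range (m+1), m.choose k * (m.choose j * k.choose j) := by
    intro k hk
    simp only [mem_range] at hk
    rw [vdm, Finset.mul_sum]
    have hsub : range (k+1) ⊆ range (m+1) := by
      intro x hx; simp only [mem_range] at hx ⊢; omega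
    refine Finset.sum_subset hsub ?_
    intro j hj hj2
    simp only [mem_range, not_lt] at hj hj2
    simp [Nat.choose_eq_zero_of_lt (show k < j by omega)]
  rw [Finset.sum_congr rfl h1, Finset.sum_comm]
  refine Finset.sum_congr rfl fun j hj => ?_
  simp only [mem_range] at hj
  have h2 : ∑ k ∈ range (m+1), m.choose k * (m.choose j * k.choose j)
      = ∑ k ∈ Ico j (m+1), m.choose k * (m.choose j * k.choose j) := by
    have hsub : Ico j (m+1) ⊆ range (m+1) := by
      intro x hx; simp only [mem_Ico, mem_range] at hx ⊢; omega
    refine (Finset.sum_subset hsub ?_).symm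
    intro k hk hk2
    simp only [mem_range] at hk
    simp only [mem_Ico, not_and, not_le] at hk2
    simp [Nat.choose_eq_zero_of_lt (show k < j by omega)]
  rw [h2, Finset.sum_Ico_eq_sum_range]
  have h3 : ∀ t ∈ range (m + 1 - j), m.choose (j+t) * (m.choose j * (j+t).choose j)
      = m.choose j ^ 2 * (m-j).choose t := by
    intro t ht
    simp only [mem_range] at ht
    have key : m.choose (j+t) * (j+t).choose j = m.choose j * (m-j).choose t := by
      have := Nat.choose_mul (n := m) (show j ≤ j+t by omega)
      simpa using this
    calc m.choose (j+t) * (m.choose j * (j+t).choose j)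
        = (m.choose (j+t) * (j+t).choose j) * m.choose j := by ring
      _ = (m.choose j * (m-j).choose t) * m.choose j := by rw [key]
      _ = m.choose j ^ 2 * (m-j).choose t := by ring
  rw [Finset.sum_congr rfl h3, ← Finset.mul_sum]
  have he : m + 1 - j = (m - j) + 1 := by omega
  rw [he, Nat.sum_range_choose]

lemma S_eq (m : ℕ) :
    S m = ∑ j ∈ range (m+1), ((m.choose j : ℝ) * Real.sqrt 2 ^ (m - j)) ^ 2 := by
  calc S m = ((∑ k ∈ range (m+1), m.choose k * (m+k).choose k : ℕ) : ℝ) := by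
        unfold S; push_cast; rfl
    _ = ((∑ j ∈ range (m+1), m.choose j ^ 2 * 2 ^ (m - j) : ℕ) : ℝ) := by rw [delannoy_id]
    _ = ∑ j ∈ range (m+1), ((m.choose j : ℝ) * Real.sqrt 2 ^ (m - j)) ^ 2 := by
        push_cast
        refine Finset.sum_congr rfl fun j hj => ?_
        rw [mul_pow, ← pow_mul, mul_comm (m-j) 2, pow_mul,
          Real.sq_sqrt (by norm_num : (0:ℝ) ≤ 2)]

lemma S_le (m : ℕ) : S m ≤ P ^ (2*m) := by
  rw [S_eq, two_mul, pow_add, ← binom_sqrt, ← sq]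
  exact Finset.sum_sq_le_sq_sum_of_nonneg fun i _ => by positivity

lemma le_S (m : ℕ) : P ^ (2*m) ≤ ((m:ℝ)+1) * S m := by
  rw [S_eq, two_mul, pow_add, ← binom_sqrt, ← sq]
  have := sq_sum_le_card_mul_sum_sq (s := range (m+1))
    (f := fun j => (m.choose j : ℝ) * Real.sqrt 2 ^ (m - j))
  simpa using this



noncomputable def T (m k : ℕ) : ℝ :=
  ((m.choose k : ℝ))^2 * (((m+1+k).choose k : ℝ))^2 / (4 * (k:ℝ)^2 - 1)

lemma S_nonneg (m : ℕ) : 0 ≤ S m :=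
  Finset.sum_nonneg fun k _ => by positivity

lemma a_unfold (m : ℕ) : a (m+1) = (1/((m:ℝ)+1)) * ∑ k ∈ range (m+1), T m k := by
  unfold a T
  push_cast
  simp [Nat.add_sub_cancel]

lemma choose_succ_le (m k : ℕ) (hk : k ≤ m + 1) :
    (m+1+k).choose k ≤ 2 * (m+k).choose k := by
  have h1 : (m+k).choose m = (m+k).choose k := by
    have := Nat.choose_symm (show k ≤ m + k from Nat.le_add_left k m)
    rwa [Nat.add_sub_cancel] at this
  have h2 : (m+k+1).choose (m+1) = (m+1+k).choose k := by
    have := Nat.choose_symm (show k ≤ m + 1 + k from Nat.le_add_left k (m+1))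
    rw [show m+1+k-k = m+1 by omega] at this
    rw [show m+k+1 = m+1+k by omega]
    exact this
  have key := Nat.add_one_mul_choose_eq (m+k) m
  -- succ (m+k) * choose (m+k) m = choose (m+k+1) (m+1) * (m+1)
  have h3 : (m+1+k).choose k * (m+1) = (m+k+1) * (m+k).choose k := by
    rw [← h2, ← h1]
    have := key.symm
    exact this
  have h4 : (m+1+k).choose k * (m+1) ≤ (2 * (m+k).choose k) * (m+1) := by
    rw [h3]
    calc (m+k+1) * (m+k).choose k ≤ (2*(m+1)) * (m+k).choose k :=
          Nat.mul_le_mul_right _ (by omega)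
      _ = (2 * (m+k).choose k) * (m+1) := by ring
  exact Nat.le_of_mul_le_mul_right h4 (Nat.succ_pos m)

lemma T_zero (m : ℕ) : T m 0 = -1 := by
  unfold T; simp

lemma T_nonneg (m k : ℕ) (hk : 1 ≤ k) : 0 ≤ T m k := by
  unfold T
  have : (1:ℝ) ≤ (k:ℝ) := by exact_mod_cast hk
  have hd : (0:ℝ) ≤ 4 * (k:ℝ)^2 - 1 := by nlinarith
  positivity

lemma T_le (m : ℕ) : ∀ k ∈ range (m+1), T m k ≤ 2 * S m ^ 2 := by
  intro k hk
  simp only [mem_range] at hk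
  have hS := S_nonneg m
  rcases Nat.eq_zero_or_pos k with h0 | h1
  · subst h0; rw [T_zero]; nlinarith
  · have hk1 : (1:ℝ) ≤ (k:ℝ) := by exact_mod_cast h1
    have hd : (3:ℝ) ≤ 4 * (k:ℝ)^2 - 1 := by nlinarith
    have hnum : ((m.choose k : ℝ))^2 * (((m+1+k).choose k : ℝ))^2 ≤ 4 * S m ^ 2 := by
      have hc : ((m+1+k).choose k : ℝ) ≤ 2 * ((m+k).choose k : ℝ) := by
        exact_mod_cast choose_succ_le m k (by omega)
      have he : (m.choose k : ℝ) * ((m+k).choose k : ℝ) ≤ S m := by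
        exact Finset.single_le_sum (f := fun k => (m.choose k : ℝ) * ((m+k).choose k : ℝ))
          (fun i _ => by positivity) (mem_range.mpr hk)
      have h1' : (0:ℝ) ≤ (m.choose k : ℝ) := by positivity
      have h2' : (0:ℝ) ≤ ((m+k).choose k : ℝ) := by positivity
      have h3' : (0:ℝ) ≤ ((m+1+k).choose k : ℝ) := by positivity
      have hstep : (m.choose k : ℝ) * (((m+1+k).choose k : ℝ)) ≤ 2 * S m := by
        calc (m.choose k : ℝ) * (((m+1+k).choose k : ℝ))
            ≤ (m.choose k : ℝ) * (2 * ((m+k).choose k : ℝ)) :=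
              mul_le_mul_of_nonneg_left hc h1'
          _ = 2 * ((m.choose k : ℝ) * ((m+k).choose k : ℝ)) := by ring
          _ ≤ 2 * S m := by linarith
      have hsq := mul_self_le_mul_self (by positivity) hstep
      nlinarith
    unfold T
    rw [div_le_iff₀ (by linarith)]
    nlinarith

lemma a_upper (m : ℕ) : a (m+1) ≤ 2 * P ^ (4*m) := by
  rw [a_unfold]
  have hsum : ∑ k ∈ range (m+1), T m k ≤ ((m:ℝ)+1) * (2 * S m ^ 2) := by
    have := Finset.sum_le_card_nsmul (range (m+1)) (T m) (2 * S m ^2) (T_le m)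
    simpa [nsmul_eq_mul] using this
  have hm1 : (0:ℝ) < (m:ℝ)+1 := by positivity
  have h2 : (1/((m:ℝ)+1)) * ∑ k ∈ range (m+1), T m k ≤ 2 * S m ^ 2 := by
    rw [one_div, inv_mul_le_iff₀ hm1]
    exact hsum
  refine h2.trans ?_
  have := S_le m
  have hS := S_nonneg m
  have : S m ^ 2 ≤ (P ^ (2*m))^2 := by nlinarith
  calc 2 * S m ^2 ≤ 2 * (P^(2*m))^2 := by linarith
    _ = 2 * P^(4*m) := by rw [← pow_mul]; ring_nf

lemma a_lower (m : ℕ) (h1 : 1 < S m / ((m:ℝ)+1)) :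
    ((S m/((m:ℝ)+1))^2 / (4*((m:ℝ)+1)^2) - 1)/((m:ℝ)+1) ≤ a (m+1) := by
  set q := S m / ((m:ℝ)+1) with hq
  have hm1 : (0:ℝ) < (m:ℝ)+1 := by positivity
  -- find k with q ≤ e_k
  obtain ⟨k, hkmem, hke⟩ : ∃ k ∈ range (m+1), q ≤ (m.choose k : ℝ) * ((m+k).choose k : ℝ) := by
    refine Finset.exists_le_of_sum_le (by simp) ?_
    rw [Finset.sum_const, Finset.card_range, nsmul_eq_mul, hq]
    push_cast
    rw [mul_div_cancel₀ _ (ne_of_gt hm1)]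
    exact le_of_eq rfl
  simp only [mem_range] at hkmem
  have hk0 : k ≠ 0 := by
    rintro rfl
    simp only [Nat.choose_zero_right, Nat.cast_one, Nat.add_zero, mul_one] at hke
    linarith
  have hk1 : (1:ℝ) ≤ (k:ℝ) := by
    have : 1 ≤ k := Nat.one_le_iff_ne_zero.mpr hk0
    exact_mod_cast this
  have hkm : (k:ℝ) ≤ (m:ℝ)+1 := by
    have : k ≤ m+1 := by omega
    exact_mod_cast this
  -- T m k ≥ q^2/(4(m+1)^2)
  have hT : q^2 / (4*((m:ℝ)+1)^2) ≤ T m k := by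
    unfold T
    have hmono : ((m+k).choose k : ℝ) ≤ ((m+1+k).choose k : ℝ) := by
      exact_mod_cast Nat.choose_le_choose k (by omega)
    have hnum : q^2 ≤ ((m.choose k : ℝ))^2 * (((m+1+k).choose k : ℝ))^2 := by
      have h2' : (0:ℝ) ≤ (m.choose k : ℝ) := by positivity
      have hq0 : (0:ℝ) < q := lt_trans one_pos h1
      have hxz : q ≤ (m.choose k : ℝ) * ((m+1+k).choose k : ℝ) :=
        hke.trans (mul_le_mul_of_nonneg_left hmono h2')
      have := mul_self_le_mul_self hq0.le hxz
      nlinarith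
    refine div_le_div₀ (by positivity) hnum (by nlinarith) (by nlinarith)
  -- sum ≥ T m k - 1
  have hsum : T m k - 1 ≤ ∑ j ∈ range (m+1), T m j := by
    have hkmem' : k ∈ range (m+1) := mem_range.mpr hkmem
    have herase := Finset.add_sum_erase (range (m+1)) (T m) hkmem'
    have h0mem : (0:ℕ) ∈ (range (m+1)).erase k := by
      simp [Finset.mem_erase, Ne.symm hk0]
    have herase2 := Finset.add_sum_erase _ (T m) h0mem
    have hrest : 0 ≤ ∑ j ∈ ((range (m+1)).erase k).erase 0, T m j := by
      refine Finset.sum_nonneg fun j hj => ?_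
      have hj0 : j ≠ 0 := by
        simp only [Finset.mem_erase] at hj
        exact hj.1
      exact T_nonneg m j (Nat.one_le_iff_ne_zero.mpr hj0)
    rw [← herase, ← herase2, T_zero]
    linarith
  rw [a_unfold]
  rw [div_le_iff₀ hm1] at *
  calc (q^2 / (4*((m:ℝ)+1)^2) - 1) ≤ T m k - 1 := by linarith
    _ ≤ ∑ j ∈ range (m+1), T m j := hsum
    _ = 1/((m:ℝ)+1) * (∑ j ∈ range (m+1), T m j) * ((m:ℝ)+1) := by
        field_simp



lemma one_le_P : 1 ≤ P := le_trans one_le_two two_le_P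

lemma P4_ge_one : (1:ℝ) ≤ P^4 := one_le_pow₀ one_le_P

lemma poly_lt_geom (c : ℝ) (hc : 0 < c) (k : ℕ) (r : ℝ) (hr : 1 < r) :
    ∀ᶠ m : ℕ in atTop, c * ((m:ℝ)+1)^k < r ^ m := by
  have h := tendsto_pow_const_div_const_pow_of_one_lt k hr
  have h1 : Tendsto (fun m : ℕ => (((m+1:ℕ)):ℝ)^k / r ^ (m+1)) atTop (𝓝 0) :=
    h.comp (tendsto_add_atTop_nat 1)
  have h2 : Tendsto (fun m : ℕ => ((m:ℝ)+1)^k / r ^ m) atTop (𝓝 0) := by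
    have heq : (fun m : ℕ => ((m:ℝ)+1)^k / r ^ m)
        = fun m : ℕ => r * ((((m+1:ℕ)):ℝ)^k / r ^ (m+1)) := by
      funext m
      have hr0 : (0:ℝ) < r := lt_trans one_pos hr
      have hrm : r ^ m ≠ 0 := by positivity
      push_cast
      rw [pow_succ]
      field_simp
    rw [heq]
    simpa using h1.const_mul r
  have h3 := h2.eventually (eventually_lt_nhds (show (0:ℝ) < 1/c by positivity))
  filter_upwards [h3] with m hm
  have hrm : (0:ℝ) < r ^ m := by positivity
  rw [div_lt_div_iff₀ hrm (by positivity)] at hm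
  nlinarith [pow_nonneg (show (0:ℝ) ≤ (m:ℝ)+1 by positivity) k]

lemma arith (u SS Z : ℝ) (hu : 0 < u)
    (h1 : u^2 < Z) (h2 : 8*P^4*u^6 ≤ Z^2) (h3 : 8*P^4 ≤ u^2) (h4 : Z ≤ u * SS) :
    1 < SS/u ∧ Z^2*P^4/u^9 ≤ ((SS/u)^2/(4*u^2) - 1)/u := by
  have hP4 := P4_ge_one
  have hZ0 : (0:ℝ) < Z := lt_of_le_of_lt (by positivity) h1
  have hSS : u < SS := by nlinarith
  have hq : 1 < SS/u := (one_lt_div hu).2 hSS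
  refine ⟨hq, ?_⟩
  have hu9 : (0:ℝ) < u^9 := by positivity
  rw [div_le_div_iff₀ hu9 hu]
  have hC : (((SS/u)^2/(4*u^2) - 1)) * u^9 = SS^2*u^5/4 - u^9 := by
    field_simp
  rw [hC]
  have e1 : Z^2 ≤ u^2 * SS^2 := by nlinarith
  have e2 : Z^2*P^4*u ≤ Z^2*u^3/8 := by nlinarith [mul_pos hZ0 hZ0, pow_pos hu 3, mul_nonneg (mul_nonneg hZ0.le hZ0.le) hu.le]
  have e3 : u^9 ≤ Z^2*u^3/8 := by nlinarith [pow_pos hu 3, pow_pos hu 6]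
  have e4 : Z^2*u^3/4 ≤ SS^2*u^5/4 := by nlinarith [pow_pos hu 3]
  linarith

lemma lower_ev : ∀ᶠ m : ℕ in atTop, (P^4)^(m+1) / ((m:ℝ)+1)^9 ≤ a (m+1) := by
  have hP2 : (1:ℝ) < P^2 := by nlinarith [two_le_P, P_pos]
  have hP4 : (1:ℝ) < P^4 := by nlinarith [hP2]
  have F1 := poly_lt_geom 1 one_pos 2 (P^2) hP2
  have F2 := poly_lt_geom (8*P^4) (by positivity) 6 (P^4) hP4
  have F3 : ∀ᶠ m : ℕ in atTop, 8*P^4 ≤ ((m:ℝ)+1)^2 := by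
    filter_upwards [tendsto_natCast_atTop_atTop (R := ℝ) |>.eventually_ge_atTop (8*P^4)] with m hm
    nlinarith [(Nat.cast_nonneg m : (0:ℝ) ≤ (m:ℝ))]
  filter_upwards [F1, F2, F3] with m hF1 hF2 hF3
  have h1 : ((m:ℝ)+1)^2 < P^(2*m) := by
    rw [pow_mul]; linarith
  have h2 : 8*P^4*((m:ℝ)+1)^6 ≤ (P^(2*m))^2 := by
    have : (P^4)^m = (P^(2*m))^2 := by
      rw [← pow_mul, ← pow_mul]; congr 1; ring
    linarith [hF2, this.le, this.ge]
  obtain ⟨hq, hbound⟩ := arith ((m:ℝ)+1) (S m) (P^(2*m)) (by positivity) h1 h2 hF3 (le_S m)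
  refine le_trans ?_ ((a_lower m hq).trans' hbound |>.trans (le_refl _))
  have : (P^(2*m))^2*P^4 = (P^4)^(m+1) := by
    rw [← pow_mul, ← pow_mul, ← pow_add]; congr 1; ring
  rw [this]

lemma lower_n : ∀ᶠ n : ℕ in atTop, (P^4)^n / (n:ℝ)^9 ≤ a n := by
  obtain ⟨M, hM⟩ := eventually_atTop.1 lower_ev
  refine eventually_atTop.2 ⟨M+1, fun n hn => ?_⟩
  obtain ⟨m, rfl⟩ : ∃ m, n = m + 1 := ⟨n - 1, by omega⟩
  have := hM m (by omega)
  convert this using 3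
  push_cast
  ring

lemma upper_n : ∀ᶠ n : ℕ in atTop, a n ≤ 2 * (P^4)^n := by
  refine eventually_atTop.2 ⟨1, fun n hn => ?_⟩
  obtain ⟨m, rfl⟩ : ∃ m, n = m + 1 := ⟨n - 1, by omega⟩
  refine (a_upper m).trans ?_
  have h1 : P^(4*m) ≤ P^(4*(m+1)) := pow_le_pow_right₀ one_le_P (by omega)
  rw [← pow_mul]
  linarith

lemma nat_rpow_inv_tendsto : Tendsto (fun n : ℕ => (n:ℝ) ^ ((1:ℝ)/(n:ℝ))) atTop (𝓝 1) := by
  have := tendsto_rpow_div.comp (tendsto_natCast_atTop_atTop (R := ℝ))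
  exact this

lemma const_rpow_inv_tendsto (C : ℝ) (hC : 0 < C) :
    Tendsto (fun n : ℕ => C ^ ((1:ℝ)/(n:ℝ))) atTop (𝓝 1) := by
  have hcont : ContinuousAt (fun y : ℝ => C ^ y) 0 := continuousAt_const_rpow hC.ne'
  have h0 : Tendsto (fun n : ℕ => (1:ℝ)/(n:ℝ)) atTop (𝓝 0) := tendsto_one_div_atTop_nhds_zero_nat
  have := hcont.tendsto.comp h0
  simpa [Real.rpow_zero, Function.comp_def] using this

lemma f_tendsto : Tendsto (fun n : ℕ => a n ^ ((1:ℝ)/(n:ℝ))) atTop (𝓝 (P^4)) := by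
  have hP4 : (0:ℝ) < P^4 := pow_pos P_pos 4
  -- lower bound sequence
  have hlo : Tendsto (fun n : ℕ => P^4 / ((n:ℝ) ^ ((1:ℝ)/(n:ℝ)))^9) atTop (𝓝 (P^4)) := by
    have h1 : Tendsto (fun n : ℕ => ((n:ℝ) ^ ((1:ℝ)/(n:ℝ)))^9) atTop (𝓝 1) := by
      simpa using nat_rpow_inv_tendsto.pow 9
    have := (tendsto_const_nhds (x := P^4) (f := atTop (α := ℕ))).div h1 one_ne_zero
    simpa [Pi.div_def] using this
  have hhi : Tendsto (fun n : ℕ => (2:ℝ) ^ ((1:ℝ)/(n:ℝ)) * P^4) atTop (𝓝 (P^4)) := by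
    have := (const_rpow_inv_tendsto 2 two_pos).mul_const (P^4)
    simpa using this
  refine tendsto_of_tendsto_of_tendsto_of_le_of_le' hlo hhi ?_ ?_
  · filter_upwards [lower_n, eventually_ge_atTop 1] with n hl hn1
    have hn0 : (0:ℝ) < (n:ℝ) := by exact_mod_cast hn1
    have hg0 : (0:ℝ) ≤ (P^4)^n / (n:ℝ)^9 := by positivity
    have hmono := Real.rpow_le_rpow hg0 hl (by positivity : (0:ℝ) ≤ (1:ℝ)/(n:ℝ))
    refine le_trans (le_of_eq ?_) hmono
    rw [Real.div_rpow (by positivity) (by positivity)]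
    congr 1
    · rw [← Real.rpow_natCast (P^4) n, ← Real.rpow_mul hP4.le]
      rw [mul_one_div, div_self (ne_of_gt hn0), Real.rpow_one]
    · rw [← Real.rpow_natCast (n:ℝ) 9, ← Real.rpow_mul hn0.le, mul_one_div,
        ← Real.rpow_natCast ((n:ℝ) ^ ((1:ℝ)/(n:ℝ))) 9, ← Real.rpow_mul hn0.le]
      congr 1
      push_cast
      ring
  · filter_upwards [lower_n, upper_n, eventually_ge_atTop 1] with n hl hu hn1
    have hn0 : (0:ℝ) < (n:ℝ) := by exact_mod_cast hn1
    have ha0 : (0:ℝ) ≤ a n := le_trans (by positivity) hl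
    have hmono := Real.rpow_le_rpow ha0 hu (by positivity : (0:ℝ) ≤ (1:ℝ)/(n:ℝ))
    refine le_trans hmono (le_of_eq ?_)
    rw [Real.mul_rpow (by norm_num) (by positivity)]
    congr 1
    rw [← Real.rpow_natCast (P^4) n, ← Real.rpow_mul hP4.le]
    rw [mul_one_div, div_self (ne_of_gt hn0), Real.rpow_one]

theorem a_root_ratio_tendsto_one :
    Filter.Tendsto
      (fun n : ℕ => a (n + 1) ^ ((1 : ℝ) / ((n : ℝ) + 1)) / a n ^ ((1 : ℝ) / (n : ℝ)))
      Filter.atTop (nhds 1) := by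
  have hP4 : (0:ℝ) < P^4 := pow_pos P_pos 4
  have h1 : Tendsto (fun n : ℕ => a (n+1) ^ ((1:ℝ)/((n+1:ℕ):ℝ))) atTop (𝓝 (P^4)) :=
    f_tendsto.comp (tendsto_add_atTop_nat 1)
  have h2 := h1.div f_tendsto (ne_of_gt hP4)
  have := h2
  rw [div_self (ne_of_gt hP4)] at this
  refine this.congr fun n => ?_
  simp only [Pi.div_apply]
  push_cast
  ring_nf
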